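/- For a binary random variable X and finite-alphabet random variable Y, the squared Bhattacharyya parameter lower-bounds the conditional entropy: Z(X|Y)² ≤ H(X|Y), where H is measured in bits. -/

import Mathlib

noncomputable section

open Classical Finset Real in
/-- Probability of an event under pmf `p`. -/
noncomputable def pr {Ω : Type*} [Fintype Ω] (p : Ω → ℝ) (E : Ω → Prop) : ℝ :=
  ∑ ω, if E ω then p ω else 0

def IsPMF {Ω : Type*} [Fintype Ω] (p : Ω → ℝ) : Prop :=
  (∀ ω, 0 ≤ p ω) ∧ ∑ ω, p ω = 1

/-- Distribution of a random variable `X`. -/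
noncomputable def pdist {Ω : Type*} [Fintype Ω] (p : Ω → ℝ) {α : Type*} (X : Ω → α)
    (x : α) : ℝ :=
  pr p fun ω => X ω = x

/-- Shannon entropy (in bits) of `X`. -/
noncomputable def ent {Ω : Type*} [Fintype Ω] (p : Ω → ℝ) {α : Type*} [Fintype α]
    (X : Ω → α) : ℝ :=
  -∑ x, pdist p X x * Real.logb 2 (pdist p X x)

/-- Conditional entropy `H(X|Y)` (in bits). -/
noncomputable def condEnt {Ω : Type*} [Fintype Ω] (p : Ω → ℝ) {α β : Type*} [Fintype α]
    [Fintype β] (X : Ω → α) (Y : Ω → β) : ℝ :=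
  ent p (fun ω => (X ω, Y ω)) - ent p Y

/-- Mutual information `I(X;Y)` (in bits). -/
noncomputable def mi {Ω : Type*} [Fintype Ω] (p : Ω → ℝ) {α β : Type*} [Fintype α]
    [Fintype β] (X : Ω → α) (Y : Ω → β) : ℝ :=
  ent p X + ent p Y - ent p (fun ω => (X ω, Y ω))

/-- Conditional mutual information `I(X;Y|W)` (in bits). -/
noncomputable def cmi {Ω : Type*} [Fintype Ω] (p : Ω → ℝ) {α β γ : Type*} [Fintype α]
    [Fintype β] [Fintype γ] (X : Ω → α) (Y : Ω → β) (W : Ω → γ) : ℝ :=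
  condEnt p X W + condEnt p Y W - condEnt p (fun ω => (X ω, Y ω)) W

/-- Bhattacharyya parameter `Z(X|Y)` for a binary `X` given `Y`.
Terms with `p_Y(y) = 0` contribute `0` (division by zero yields `0`). -/
noncomputable def bhat {Ω : Type*} [Fintype Ω] (p : Ω → ℝ) {β : Type*} [Fintype β]
    (X : Ω → Bool) (Y : Ω → β) : ℝ :=
  2 * ∑ y, pdist p Y y *
    Real.sqrt (((pr p fun ω => X ω = false ∧ Y ω = y) / pdist p Y y) *
      ((pr p fun ω => X ω = true ∧ Y ω = y) / pdist p Y y))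

/-- Binary entropy function (in bits). -/
noncomputable def Hb (x : ℝ) : ℝ :=
  -x * Real.logb 2 x - (1 - x) * Real.logb 2 (1 - x)

end


open Real Set

noncomputable def Fa (x : ℝ) : ℝ := (1+x) * Real.log (1+x) + (1-x) * Real.log (1-x)
noncomputable def Ka (x : ℝ) : ℝ := 2 * Real.log 2 * x^2 - Fa x
noncomputable def Ka' (x : ℝ) : ℝ := 4 * Real.log 2 * x - (Real.log (1+x) - Real.log (1-x))

lemma hasDerivAt_Ka {x : ℝ} (h1 : -1 < x) (h2 : x < 1) :
    HasDerivAt Ka (Ka' x) x := by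
  have h1' : (0:ℝ) < 1 + x := by linarith
  have h2' : (0:ℝ) < 1 - x := by linarith
  have d1 : HasDerivAt (fun x : ℝ => (1+x) * Real.log (1+x)) (Real.log (1+x) + 1) x := by
    have hl : HasDerivAt (fun x : ℝ => Real.log (1+x)) (1/(1+x)) x := by
      have h := HasDerivAt.log ((hasDerivAt_id x).const_add 1) h1'.ne'
      norm_num at h ⊢
      convert h using 1
    have := ((hasDerivAt_id x).const_add 1).mul hl
    refine this.congr_deriv ?_
    rw [id, mul_one_div_cancel h1'.ne']
    ring
  have d2 : HasDerivAt (fun x : ℝ => (1-x) * Real.log (1-x)) (-Real.log (1-x) - 1) x := by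
    have hl : HasDerivAt (fun x : ℝ => Real.log (1-x)) (-(1/(1-x))) x := by
      have hi : HasDerivAt (fun x : ℝ => 1 - x) (-1) x := by
        exact (hasDerivAt_id x).const_sub 1
      simpa [one_div, neg_div] using HasDerivAt.log hi h2'.ne'
    have hi : HasDerivAt (fun x : ℝ => 1 - x) (-1) x := by
      exact (hasDerivAt_id x).const_sub 1
    have := hi.mul hl
    refine this.congr_deriv ?_
    rw [mul_neg, mul_one_div_cancel h2'.ne']
    ring
  have dF : HasDerivAt Fa (Real.log (1+x) - Real.log (1-x)) x := by
    have := d1.add d2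
    refine this.congr_deriv ?_
    ring
  have dq : HasDerivAt (fun x : ℝ => 2 * Real.log 2 * x^2) (4 * Real.log 2 * x) x := by
    have := (hasDerivAt_pow 2 x).const_mul (2 * Real.log 2)
    refine this.congr_deriv ?_
    push_cast
    ring
  exact dq.sub dF

lemma hasDerivAt_Ka' {x : ℝ} (h1 : -1 < x) (h2 : x < 1) :
    HasDerivAt Ka' (4 * Real.log 2 - (1/(1+x) + 1/(1-x))) x := by
  have h1' : (0:ℝ) < 1 + x := by linarith
  have h2' : (0:ℝ) < 1 - x := by linarith
  have hl1 : HasDerivAt (fun x : ℝ => Real.log (1+x)) (1/(1+x)) x := by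
    have h := HasDerivAt.log ((hasDerivAt_id x).const_add 1) h1'.ne'
    norm_num at h ⊢
    convert h using 1
  have hl2 : HasDerivAt (fun x : ℝ => Real.log (1-x)) (-(1/(1-x))) x := by
    have hi : HasDerivAt (fun x : ℝ => 1 - x) (-1) x := by
      exact (hasDerivAt_id x).const_sub 1
    simpa [one_div, neg_div] using HasDerivAt.log hi h2'.ne'
  have dlin : HasDerivAt (fun x : ℝ => 4 * Real.log 2 * x) (4 * Real.log 2) x := by
    simpa using (hasDerivAt_id x).const_mul (4 * Real.log 2)
  have := dlin.sub (hl1.sub hl2)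
  refine this.congr_deriv ?_
  ring

lemma continuous_Ka : Continuous Ka := by
  have h := Real.continuous_mul_log
  have c1 : Continuous fun x : ℝ => (1+x) * Real.log (1+x) :=
    h.comp (continuous_const.add continuous_id)
  have c2 : Continuous fun x : ℝ => (1-x) * Real.log (1-x) :=
    h.comp (continuous_const.sub continuous_id)
  exact (continuous_const.mul (continuous_pow 2)).sub (c1.add c2)

noncomputable def xz : ℝ := Real.sqrt (1 - 1/(2*Real.log 2))

lemma log2_pos : (0:ℝ) < Real.log 2 := Real.log_pos one_lt_two

lemma hxz_arg : (0:ℝ) < 1 - 1/(2*Real.log 2) := by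
  have h := Real.log_two_gt_d9
  rw [sub_pos, div_lt_one (by linarith)]
  linarith

lemma hxz_sq : xz^2 = 1 - 1/(2*Real.log 2) := Real.sq_sqrt hxz_arg.le

lemma hxz_pos : 0 < xz := Real.sqrt_pos.2 hxz_arg

lemma hxz_lt_one : xz < 1 := by
  rw [show (1:ℝ) = Real.sqrt 1 by simp [Real.sqrt_one]]
  apply Real.sqrt_lt_sqrt hxz_arg.le
  have : 0 < 1/(2*Real.log 2) := by positivity
  linarith

lemma Ka'_zero : Ka' 0 = 0 := by simp [Ka']

lemma Ka_zero : Ka 0 = 0 := by simp [Ka, Fa]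

lemma Ka_one : Ka 1 = 0 := by
  simp [Ka, Fa, Real.log_zero]
  ring

lemma deriv_Ka_eq {x : ℝ} (h1 : -1 < x) (h2 : x < 1) : deriv Ka x = Ka' x :=
  (hasDerivAt_Ka h1 h2).deriv

lemma Ka'_nonneg_aux : ∀ x ∈ Set.Icc (0:ℝ) xz, 0 ≤ Ka' x := by
  have hmono : MonotoneOn Ka' (Set.Icc (0:ℝ) xz) := by
    apply monotoneOn_of_deriv_nonneg (convex_Icc _ _)
    · intro x hx
      have h1 : -1 < x := by linarith [hx.1]
      have h2 : x < 1 := lt_of_le_of_lt hx.2 hxz_lt_one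
      exact (hasDerivAt_Ka' h1 h2).continuousAt.continuousWithinAt
    · intro x hx
      rw [interior_Icc] at hx
      have h1 : -1 < x := by linarith [hx.1]
      have h2 : x < 1 := lt_trans hx.2 hxz_lt_one
      exact (hasDerivAt_Ka' h1 h2).differentiableAt.differentiableWithinAt
    · intro x hx
      rw [interior_Icc] at hx
      have h1 : -1 < x := by linarith [hx.1]
      have h2 : x < 1 := lt_trans hx.2 hxz_lt_one
      rw [(hasDerivAt_Ka' h1 h2).deriv]
      have h1' : (0:ℝ) < 1 + x := by linarith
      have h2' : (0:ℝ) < 1 - x := by linarith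
      have hxx : x^2 < xz^2 := by nlinarith [hx.1, hx.2, hxz_pos]
      have hxx2 : 1/(2*Real.log 2) < 1 - x^2 := by
        rw [hxz_sq] at hxx; linarith
      have h3' : (1:ℝ) - x^2 ≠ 0 := by nlinarith
      have hsum : 1/(1+x) + 1/(1-x) = 2/(1-x^2) := by
        field_simp
        ring
      rw [hsum]
      rw [sub_nonneg, div_le_iff₀ (by nlinarith)]
      have hL := log2_pos
      rw [div_lt_iff₀ (by positivity)] at hxx2
      nlinarith
  intro x hx
  have h0 : (0:ℝ) ∈ Set.Icc (0:ℝ) xz := ⟨le_refl _, hxz_pos.le⟩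
  have := hmono h0 hx hx.1
  rw [Ka'_zero] at this
  exact this

lemma Ka_nonneg_left : ∀ x ∈ Set.Icc (0:ℝ) xz, 0 ≤ Ka x := by
  have hmono : MonotoneOn Ka (Set.Icc (0:ℝ) xz) := by
    apply monotoneOn_of_deriv_nonneg (convex_Icc _ _)
    · exact continuous_Ka.continuousOn
    · intro x hx
      rw [interior_Icc] at hx
      have h1 : -1 < x := by linarith [hx.1]
      have h2 : x < 1 := lt_trans hx.2 hxz_lt_one
      exact (hasDerivAt_Ka h1 h2).differentiableAt.differentiableWithinAt
    · intro x hx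
      rw [interior_Icc] at hx
      have h1 : -1 < x := by linarith [hx.1]
      have h2 : x < 1 := lt_trans hx.2 hxz_lt_one
      rw [deriv_Ka_eq h1 h2]
      exact Ka'_nonneg_aux x ⟨hx.1.le, hx.2.le⟩
  intro x hx
  have h0 : (0:ℝ) ∈ Set.Icc (0:ℝ) xz := ⟨le_refl _, hxz_pos.le⟩
  have := hmono h0 hx hx.1
  rw [Ka_zero] at this
  exact this

lemma Ka_concave_right : ConcaveOn ℝ (Set.Icc xz 1) Ka := by
  apply concaveOn_of_deriv2_nonpos (convex_Icc _ _) continuous_Ka.continuousOn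
  · intro x hx
    rw [interior_Icc] at hx
    have h1 : -1 < x := by linarith [hxz_pos, hx.1]
    have h2 : x < 1 := hx.2
    exact (hasDerivAt_Ka h1 h2).differentiableAt.differentiableWithinAt
  · intro x hx
    rw [interior_Icc] at hx
    have h1 : -1 < x := by linarith [hxz_pos, hx.1]
    have h2 : x < 1 := hx.2
    have hev : deriv Ka =ᶠ[nhds x] Ka' := by
      filter_upwards [Ioo_mem_nhds h1 h2] with y hy
      exact deriv_Ka_eq hy.1 hy.2
    exact ((hasDerivAt_Ka' h1 h2).differentiableAt.congr_of_eventuallyEq hev).differentiableWithinAt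
  · intro x hx
    rw [interior_Icc] at hx
    have h1 : -1 < x := by linarith [hxz_pos, hx.1]
    have h2 : x < 1 := hx.2
    have hev : deriv Ka =ᶠ[nhds x] Ka' := by
      filter_upwards [Ioo_mem_nhds h1 h2] with y hy
      exact deriv_Ka_eq hy.1 hy.2
    have : deriv (deriv Ka) x = deriv Ka' x := hev.deriv_eq
    simp only [Function.iterate_succ, Function.iterate_zero, Function.comp_apply, id_eq]
    rw [this, (hasDerivAt_Ka' h1 h2).deriv]
    have h1' : (0:ℝ) < 1 + x := by linarith
    have h2' : (0:ℝ) < 1 - x := by linarith [hx.2]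
    have hxx : xz^2 ≤ x^2 := by nlinarith [hx.1, hxz_pos]
    have hxx2 : 1 - x^2 ≤ 1/(2*Real.log 2) := by
      rw [hxz_sq] at hxx; linarith
    have h3' : (1:ℝ) - x^2 ≠ 0 := by nlinarith
    have hsum : 1/(1+x) + 1/(1-x) = 2/(1-x^2) := by
      field_simp
      ring
    rw [hsum, sub_nonpos, le_div_iff₀ (by nlinarith)]
    have hL := log2_pos
    rw [le_div_iff₀ (by positivity)] at hxx2
    nlinarith [hxx2]

lemma Ka_nonneg {x : ℝ} (h0 : 0 ≤ x) (h1 : x ≤ 1) : 0 ≤ Ka x := by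
  rcases le_total x xz with h | h
  · exact Ka_nonneg_left x ⟨h0, h⟩
  · have hx0 : Ka xz ≥ 0 := Ka_nonneg_left xz ⟨hxz_pos.le, le_refl _⟩
    have hne : xz ≠ 1 := hxz_lt_one.ne
    set t := (1 - x)/(1 - xz) with ht
    have hd : 0 < 1 - xz := by linarith [hxz_lt_one]
    have ht0 : 0 ≤ t := div_nonneg (by linarith) hd.le
    have ht1 : t ≤ 1 := by
      rw [ht, div_le_one hd]
      linarith
    have hcomb : t * (xz - 1) = x - 1 := by
      rw [ht]
      field_simp
      ring
    have key := Ka_concave_right.2 (Set.mem_Icc.2 ⟨le_refl xz, hxz_lt_one.le⟩)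
      (Set.mem_Icc.2 ⟨hxz_lt_one.le, le_refl (1:ℝ)⟩) ht0
      (show (0:ℝ) ≤ 1 - t by linarith) (show t + (1 - t) = 1 by ring)
    simp only [smul_eq_mul, mul_one] at key
    have hx' : t * xz + (1 - t) = x := by linarith
    rw [hx', Ka_one, mul_zero, add_zero] at key
    have h0' : 0 ≤ t * Ka xz := mul_nonneg ht0 hx0
    linarith

lemma entropy_nat {s : ℝ} (h0 : 0 ≤ s) (h2 : s ≤ 1/2) :
    4 * Real.log 2 * (s*(1-s)) ≤ -(s * Real.log s) - (1-s) * Real.log (1-s) := by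
  rcases eq_or_lt_of_le h0 with h | hs
  · simp [← h]
  · have hKa := Ka_nonneg (x := 1 - 2*s) (by linarith) (by linarith)
    have h1s : (0:ℝ) < 1 - s := by linarith
    have hFa : Fa (1 - 2*s) = 2*Real.log 2 + 2*(1-s)*Real.log (1-s) + 2*s*Real.log s := by
      unfold Fa
      rw [show (1:ℝ) + (1 - 2*s) = 2*(1-s) by ring, show (1:ℝ) - (1 - 2*s) = 2*s by ring,
        Real.log_mul two_ne_zero h1s.ne', Real.log_mul two_ne_zero hs.ne']
      ring
    unfold Ka at hKa
    rw [hFa] at hKa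
    nlinarith [hKa]

lemma entropy_bits {s : ℝ} (h0 : 0 ≤ s) (h1 : s ≤ 1) :
    4 * (s*(1-s)) ≤ -(s * Real.logb 2 s) - (1-s) * Real.logb 2 (1-s) := by
  have key : ∀ t : ℝ, 0 ≤ t → t ≤ 1/2 →
      4 * (t*(1-t)) ≤ -(t * Real.logb 2 t) - (1-t) * Real.logb 2 (1-t) := by
    intro t ht ht2
    have hL := log2_pos
    have h := entropy_nat ht ht2
    have hrw : -(t * Real.logb 2 t) - (1-t) * Real.logb 2 (1-t)
        = (-(t * Real.log t) - (1-t) * Real.log (1-t)) / Real.log 2 := by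
      rw [Real.logb, Real.logb]
      field_simp
    rw [hrw, le_div_iff₀ hL]
    nlinarith [h]
  rcases le_total s (1/2) with h | h
  · exact key s h0 h
  · have := key (1-s) (by linarith) (by linarith)
    rw [sub_sub_cancel] at this
    linarith

lemma point_ineq {a b : ℝ} (ha : 0 ≤ a) (hb : 0 ≤ b) :
    4 * (a*b/(a+b)) ≤ (a+b) * Real.logb 2 (a+b) - a * Real.logb 2 a - b * Real.logb 2 b := by
  rcases eq_or_lt_of_le (add_nonneg ha hb) with h | hq
  · have ha0 : a = 0 := by linarith
    have hb0 : b = 0 := by linarith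
    simp [ha0, hb0]
  · set s := a/(a+b) with hsdef
    have h0s : 0 ≤ s := div_nonneg ha hq.le
    have h1s : s ≤ 1 := by
      rw [hsdef, div_le_one hq]
      linarith
    have h1ms : 1 - s = b/(a+b) := by
      rw [hsdef]
      field_simp
      ring
    have key := entropy_bits h0s h1s
    have hmul := mul_le_mul_of_nonneg_left key hq.le
    have hlhs : (a+b) * (4 * (s*(1-s))) = 4 * (a*b/(a+b)) := by
      rw [h1ms, hsdef]
      field_simp
    have hrhs : (a+b) * (-(s * Real.logb 2 s) - (1-s) * Real.logb 2 (1-s))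
        = -(a * Real.logb 2 (a/(a+b))) - b * Real.logb 2 (b/(a+b)) := by
      rw [h1ms, hsdef]
      field_simp
    rw [hlhs, hrhs] at hmul
    have hla : a * Real.logb 2 (a/(a+b)) = a * Real.logb 2 a - a * Real.logb 2 (a+b) := by
      rcases eq_or_lt_of_le ha with h | h
      · simp [← h]
      · rw [Real.logb_div h.ne' hq.ne']
        ring
    have hlb : b * Real.logb 2 (b/(a+b)) = b * Real.logb 2 b - b * Real.logb 2 (a+b) := by
      rcases eq_or_lt_of_le hb with h | h
      · simp [← h]
      · rw [Real.logb_div h.ne' hq.ne']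
        ring
    rw [hla, hlb] at hmul
    linarith

/-- `Z(X|Y)² ≤ H(X|Y)` (entropy in bits). -/
theorem bhat_sq_le_condEnt {Ω β : Type*} [Fintype Ω] [Fintype β]
    (p : Ω → ℝ) (hp : IsPMF p) (X : Ω → Bool) (Y : Ω → β) :
    (bhat p X Y) ^ 2 ≤ condEnt p X Y := by
  classical
  set A : β → ℝ := fun y => pr p (fun ω => X ω = false ∧ Y ω = y) with hA
  set B : β → ℝ := fun y => pr p (fun ω => X ω = true ∧ Y ω = y) with hB
  have hprnn : ∀ E : Ω → Prop, 0 ≤ pr p E := by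
    intro E
    apply Finset.sum_nonneg
    intro ω _
    by_cases h : E ω <;> simp [pr, h, hp.1 ω]
  have hAnn : ∀ y, 0 ≤ A y := fun y => hprnn _
  have hBnn : ∀ y, 0 ≤ B y := fun y => hprnn _
  have hq : ∀ y, pdist p Y y = A y + B y := by
    intro y
    rw [hA, hB]
    unfold pdist pr
    rw [← Finset.sum_add_distrib]
    refine Finset.sum_congr rfl fun ω _ => ?_
    by_cases hY : Y ω = y
    · cases hX : X ω <;> simp [hY, hX]
    · simp [hY]
  have hqnn : ∀ y, 0 ≤ pdist p Y y := fun y => hprnn _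
  have hsum1 : ∑ y, pdist p Y y = 1 := by
    unfold pdist pr
    rw [Finset.sum_comm, ← hp.2]
    refine Finset.sum_congr rfl fun ω _ => ?_
    simp
  have hjoint : ∀ (x : Bool) (y : β),
      pdist p (fun ω => (X ω, Y ω)) (x, y) = pr p (fun ω => X ω = x ∧ Y ω = y) := by
    intro x y
    unfold pdist pr
    refine Finset.sum_congr rfl fun ω _ => ?_
    simp [Prod.mk.injEq]
  -- conditional entropy as a sum over y
  have hcond : condEnt p X Y = ∑ y, ((A y + B y) * Real.logb 2 (A y + B y)
      - A y * Real.logb 2 (A y) - B y * Real.logb 2 (B y)) := by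
    unfold condEnt ent
    rw [Fintype.sum_prod_type, Fintype.sum_bool]
    have h1 : ∀ y, pdist p (fun ω => (X ω, Y ω)) (true, y) = B y := fun y => hjoint true y
    have h2 : ∀ y, pdist p (fun ω => (X ω, Y ω)) (false, y) = A y := fun y => hjoint false y
    simp only [h1, h2, hq]
    rw [Finset.sum_sub_distrib, Finset.sum_sub_distrib]
    ring
  -- Cauchy-Schwarz step
  have hCS : (∑ y, pdist p Y y *
      Real.sqrt ((A y / pdist p Y y) * (B y / pdist p Y y))) ^ 2
      ≤ (∑ y, pdist p Y y) * ∑ y, A y * B y / pdist p Y y := by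
    apply Finset.sum_sq_le_sum_mul_sum_of_sq_eq_mul
    · intro y _
      exact hqnn y
    · intro y _
      exact div_nonneg (mul_nonneg (hAnn y) (hBnn y)) (hqnn y)
    · intro y _
      have hnn : 0 ≤ (A y / pdist p Y y) * (B y / pdist p Y y) :=
        mul_nonneg (div_nonneg (hAnn y) (hqnn y)) (div_nonneg (hBnn y) (hqnn y))
      rw [mul_pow, Real.sq_sqrt hnn]
      rcases eq_or_lt_of_le (hqnn y) with h | h
      · rw [← h]
        simp
      · field_simp
  rw [hsum1, one_mul] at hCS
  -- pointwise bound and conclusion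
  have hpoint : ∑ y, 4 * (A y * B y / pdist p Y y) ≤ condEnt p X Y := by
    rw [hcond]
    apply Finset.sum_le_sum
    intro y _
    rw [hq y]
    exact point_ineq (hAnn y) (hBnn y)
  have hbb : bhat p X Y = 2 * ∑ y, pdist p Y y *
      Real.sqrt ((A y / pdist p Y y) * (B y / pdist p Y y)) := rfl
  rw [hbb, mul_pow]
  calc (2:ℝ)^2 * (∑ y, pdist p Y y *
      Real.sqrt ((A y / pdist p Y y) * (B y / pdist p Y y)))^2
      ≤ 2^2 * ∑ y, A y * B y / pdist p Y y := by
        apply mul_le_mul_of_nonneg_left hCS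
        norm_num
    _ = ∑ y, 4 * (A y * B y / pdist p Y y) := by
        rw [Finset.mul_sum]
        norm_num
    _ ≤ condEnt p X Y := hpoint
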